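/- Let A be a nonempty finite set and let c be an integer with c ≥ |A|. Then the following identity holds in ℤ[X]: P_{c−1}(X) + Σ_{∅ ≠ K ⊆ A} (−1)^{|K|−1} · [ (P_{c−|K|−1}(X) − 1)·P_{|K|−1}(X) − P_{c−|K|−1}(X)·P_{|K|}(X) ] = 0, where P_m(X) = Σ_{s=0}^{m} X^s and P_{−1}(X) = 0. -/

import Mathlib

open Polynomial Finset

/-- For `m : ℤ`, the polynomial `P_m(X) = 1 + X + ... + X^m` (and `P_m = 0` for `m < 0`). -/
noncomputable def Ppoly (m : ℤ) : Polynomial ℤ :=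
  ∑ s ∈ Finset.range (m + 1).toNat, Polynomial.X ^ s

lemma split_sum (k C : ℕ) (h : k ≤ C) :
    (∑ s ∈ Finset.range C, (Polynomial.X : Polynomial ℤ) ^ s) =
      (∑ s ∈ Finset.range k, Polynomial.X ^ s) +
        Polynomial.X ^ k * ∑ s ∈ Finset.range (C - k), Polynomial.X ^ s := by
  rw [Finset.mul_sum]
  simp_rw [← pow_add]
  rw [← Finset.sum_Ico_eq_sum_range (fun i => (Polynomial.X : Polynomial ℤ) ^ i) k C]
  rw [Finset.range_eq_Ico]
  simp only [Finset.range_eq_Ico]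
  exact (Finset.sum_Ico_consecutive (fun i => (Polynomial.X : Polynomial ℤ) ^ i) (Nat.zero_le k) h).symm

lemma term_eq (c : ℤ) (k : ℕ) (hk : 1 ≤ k) (hkc : (k : ℤ) ≤ c) :
    (Ppoly (c - k - 1) - 1) * Ppoly ((k : ℤ) - 1) - Ppoly (c - k - 1) * Ppoly (k : ℤ)
      = -Ppoly (c - 1) := by
  have h1 : (c - k - 1 + 1).toNat = c.toNat - k := by omega
  have h2 : ((k : ℤ) - 1 + 1).toNat = k := by omega
  have h3 : ((k : ℤ) + 1).toNat = k + 1 := by omega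
  have h4 : (c - 1 + 1).toNat = c.toNat := by omega
  unfold Ppoly
  rw [h1, h2, h3, h4, Finset.sum_range_succ,
    split_sum k c.toNat (by omega)]
  ring

theorem stmt12 {ι : Type*} [DecidableEq ι] (A : Finset ι) (hA : A.Nonempty)
    (c : ℤ) (hc : (A.card : ℤ) ≤ c) :
    Ppoly (c - 1) +
      ∑ K ∈ A.powerset.erase ∅,
        (-1 : Polynomial ℤ) ^ (K.card - 1) *
          ((Ppoly (c - K.card - 1) - 1) * Ppoly ((K.card : ℤ) - 1) -
            Ppoly (c - K.card - 1) * Ppoly (K.card : ℤ))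
      = 0 := by
  have hsum : ∀ K ∈ A.powerset.erase ∅,
      (-1 : Polynomial ℤ) ^ (K.card - 1) *
        ((Ppoly (c - K.card - 1) - 1) * Ppoly ((K.card : ℤ) - 1) -
          Ppoly (c - K.card - 1) * Ppoly (K.card : ℤ))
      = (-1 : Polynomial ℤ) ^ K.card * Ppoly (c - 1) := by
    intro K hK
    rw [Finset.mem_erase, Finset.mem_powerset] at hK
    have hk1 : 1 ≤ K.card := Finset.card_pos.mpr (Finset.nonempty_iff_ne_empty.mpr hK.1)
    have hkc : (K.card : ℤ) ≤ c :=
      le_trans (by exact_mod_cast Finset.card_le_card hK.2) hc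
    rw [term_eq c K.card hk1 hkc]
    have hp : (-1 : Polynomial ℤ) ^ K.card = (-1) ^ (K.card - 1) * (-1) := by
      rw [← pow_succ]; congr 1; omega
    rw [hp]; ring
  rw [Finset.sum_congr rfl hsum, ← Finset.sum_mul]
  have hpow : (∑ K ∈ A.powerset.erase ∅, (-1 : Polynomial ℤ) ^ K.card) = -1 := by
    have h0 : (∅ : Finset ι) ∈ A.powerset := Finset.mem_powerset.mpr (Finset.empty_subset A)
    have := Finset.sum_erase_add A.powerset (fun K => (-1 : Polynomial ℤ) ^ K.card) h0
    have htot : (∑ K ∈ A.powerset, (-1 : Polynomial ℤ) ^ K.card) = 0 := by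
      have hz : (∑ K ∈ A.powerset, (-1 : ℤ) ^ K.card) = 0 := by
        rw [Finset.sum_powerset_neg_one_pow_card]
        simp [Finset.nonempty_iff_ne_empty.mp hA]
      calc (∑ K ∈ A.powerset, (-1 : Polynomial ℤ) ^ K.card)
          = Polynomial.C (∑ K ∈ A.powerset, (-1 : ℤ) ^ K.card) := by
            rw [map_sum]; simp
        _ = 0 := by rw [hz]; simp
    simp only [Finset.card_empty, pow_zero, htot] at this
    linear_combination this
  rw [hpow]
  ring
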